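/- Let (b_i)_{i in I_0} be real numbers with b_i in [0,1] for each i in I_0. If the p-values (p_1,...,p_n) are PRDS on I_0, then P( intersection over i in I_0 of {p_i > b_i} ) >= product over i in I_0 of P(p_i > b_i). -/

import Mathlib

open MeasureTheory

noncomputable section


section Aux

/-- Chebyshev's association inequality for two bounded monotone functions. -/
lemma cheb_assoc (ν : Measure ℝ) [IsProbabilityMeasure ν] {u v : ℝ → ℝ}
    (hu : Monotone u) (hv : Monotone v) (hub : ∀ x, |u x| ≤ 1) (hvb : ∀ x, |v x| ≤ 1) :
    (∫ x, u x ∂ν) * (∫ x, v x ∂ν) ≤ ∫ x, u x * v x ∂ν := by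
  have hum := hu.measurable
  have hvm := hv.measurable
  have hui : Integrable u ν :=
    (integrable_const (1:ℝ)).mono' hum.aestronglyMeasurable (ae_of_all _ fun x => by
      simpa using hub x)
  have hvi : Integrable v ν :=
    (integrable_const (1:ℝ)).mono' hvm.aestronglyMeasurable (ae_of_all _ fun x => by
      simpa using hvb x)
  have huvi : Integrable (fun x => u x * v x) ν :=
    (integrable_const (1:ℝ)).mono' (hum.mul hvm).aestronglyMeasurable (ae_of_all _ fun x => by
      rw [Real.norm_eq_abs, abs_mul]
      calc |u x| * |v x| ≤ 1 * 1 := mul_le_mul (hub x) (hvb x) (abs_nonneg _) zero_le_one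
        _ = 1 := one_mul 1)
  have hA : Integrable (fun z : ℝ × ℝ => u z.1 * v z.1) (ν.prod ν) := by
    simpa using huvi.mul_prod (integrable_const (1:ℝ))
  have hB : Integrable (fun z : ℝ × ℝ => u z.2 * v z.2) (ν.prod ν) := by
    simpa using (integrable_const (1:ℝ)).mul_prod huvi
  have hC : Integrable (fun z : ℝ × ℝ => u z.1 * v z.2) (ν.prod ν) := hui.mul_prod hvi
  have hD : Integrable (fun z : ℝ × ℝ => v z.1 * u z.2) (ν.prod ν) := hvi.mul_prod hui
  have hAB : Integrable (fun z : ℝ × ℝ => u z.1 * v z.1 + u z.2 * v z.2) (ν.prod ν) := hA.add hB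
  have hCD : Integrable (fun z : ℝ × ℝ => u z.1 * v z.2 + v z.1 * u z.2) (ν.prod ν) := hC.add hD
  have iA : ∫ z : ℝ × ℝ, u z.1 * v z.1 ∂(ν.prod ν) = ∫ x, u x * v x ∂ν := by
    simpa using integral_prod_mul (μ := ν) (ν := ν) (fun x => u x * v x) (fun _ => (1:ℝ))
  have iB : ∫ z : ℝ × ℝ, u z.2 * v z.2 ∂(ν.prod ν) = ∫ x, u x * v x ∂ν := by
    simpa using integral_prod_mul (μ := ν) (ν := ν) (fun _ => (1:ℝ)) (fun x => u x * v x)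
  have iC : ∫ z : ℝ × ℝ, u z.1 * v z.2 ∂(ν.prod ν) = (∫ x, u x ∂ν) * ∫ x, v x ∂ν :=
    integral_prod_mul u v
  have iD : ∫ z : ℝ × ℝ, v z.1 * u z.2 ∂(ν.prod ν) = (∫ x, v x ∂ν) * ∫ x, u x ∂ν :=
    integral_prod_mul v u
  have hnn : 0 ≤ ∫ z : ℝ × ℝ, (u z.1 - u z.2) * (v z.1 - v z.2) ∂(ν.prod ν) := by
    refine integral_nonneg fun z => ?_
    simp only [Pi.zero_apply]
    rcases le_total z.1 z.2 with h | h
    · nlinarith [mul_nonneg (sub_nonneg.2 (hu h)) (sub_nonneg.2 (hv h))]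
    · nlinarith [mul_nonneg (sub_nonneg.2 (hu h)) (sub_nonneg.2 (hv h))]
  have hexp : (fun z : ℝ × ℝ => (u z.1 - u z.2) * (v z.1 - v z.2)) =
      fun z : ℝ × ℝ => (u z.1 * v z.1 + u z.2 * v z.2) - (u z.1 * v z.2 + v z.1 * u z.2) := by
    funext z; ring
  rw [hexp, integral_sub hAB hCD, integral_add hA hB, integral_add hC hD,
    iA, iB, iC, iD] at hnn
  nlinarith [hnn]

variable {Ω : Type*} {n : ℕ} [MeasurableSpace Ω]
    (μ : Measure Ω) [IsProbabilityMeasure μ] (p : Fin n → Ω → ℝ)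

lemma prds_key (I0 : Finset (Fin n)) (hpm : ∀ i, Measurable (p i))
    (b : Fin n → ℝ)
    (hprds : ∀ i ∈ I0, ∀ f : (Fin n → ℝ) → ℝ, Monotone f →
      Integrable (fun ω => f fun j => p j ω) μ →
        ∃ g : ℝ → ℝ, Monotone g ∧
          (fun ω => g (p i ω))
            =ᵐ[μ] μ[(fun ω => f fun j => p j ω)|MeasurableSpace.comap (p i) inferInstance]) :
    ∀ S : Finset (Fin n), S ⊆ I0 →
      ∏ i ∈ S, (μ {ω | b i < p i ω}).toReal ≤ (μ {ω | ∀ i ∈ S, b i < p i ω}).toReal := by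
  intro S
  induction S using Finset.induction_on with
  | empty =>
    intro _
    simp
  | @insert i S' hiS' ih =>
    intro hsub
    have hiI0 : i ∈ I0 := hsub (Finset.mem_insert_self i S')
    have hS'sub : S' ⊆ I0 := fun j hj => hsub (Finset.mem_insert_of_mem hj)
    -- the target sets
    set T : Set Ω := {ω | ∀ j ∈ S', b j < p j ω} with hT
    have hTmeas : MeasurableSet T := by
      have : T = ⋂ j ∈ S', (p j) ⁻¹' Set.Ioi (b j) := by
        ext ω; simp [hT]
      rw [this]
      exact MeasurableSet.biInter S'.countable_toSet fun j _ => (hpm j) measurableSet_Ioi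
    -- the monotone function f
    set f : (Fin n → ℝ) → ℝ := fun x => if ∀ j ∈ S', b j < x j then 1 else 0 with hf
    have hfmono : Monotone f := by
      intro x y hxy
      simp only [hf]
      split_ifs with hx hy
      · exact le_refl 1
      · exact absurd (fun j hj => lt_of_lt_of_le (hx j hj) (hxy j)) hy
      · exact zero_le_one
      · exact le_refl 0
    have hfeq : (fun ω => f fun j => p j ω) = T.indicator (fun _ => (1:ℝ)) := by
      funext ω
      by_cases hω : ω ∈ T
      · simp only [hf, Set.indicator_of_mem hω]
        exact if_pos hω
      · simp only [hf, Set.indicator_of_notMem hω]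
        exact if_neg hω
    have hfint : Integrable (fun ω => f fun j => p j ω) μ := by
      rw [hfeq]
      exact (integrable_const (1:ℝ)).indicator hTmeas
    -- PRDS
    obtain ⟨g, hgmono, hg⟩ := hprds i hiI0 f hfmono hfint
    have hm : MeasurableSpace.comap (p i) inferInstance ≤ ‹MeasurableSpace Ω› :=
      (hpm i).comap_le
    haveI : SigmaFinite (μ.trim hm) := by infer_instance
    -- condexp bounds
    have hce_nonneg : 0 ≤ᵐ[μ]
        μ[(fun ω => f fun j => p j ω)|MeasurableSpace.comap (p i) inferInstance] := by
      refine condExp_nonneg (ae_of_all _ fun ω => ?_)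
      simp only [hf]
      split_ifs <;> norm_num
    have hce_le_one :
        μ[(fun ω => f fun j => p j ω)|MeasurableSpace.comap (p i) inferInstance]
          ≤ᵐ[μ] fun _ => (1:ℝ) := by
      have h1 : μ[(fun _ : Ω => (1:ℝ))|MeasurableSpace.comap (p i) inferInstance]
          = fun _ => (1:ℝ) := condExp_const hm 1
      have := condExp_mono (m := MeasurableSpace.comap (p i) inferInstance)
        hfint (integrable_const (1:ℝ))
        (ae_of_all _ fun ω => by simp only [hf]; split_ifs <;> norm_num)
      rw [h1] at this
      exact this
    -- truncated g
    set g' : ℝ → ℝ := fun x => max 0 (min (g x) 1) with hg'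
    have hg'mono : Monotone g' := fun a c hac =>
      max_le_max le_rfl (min_le_min (hgmono hac) le_rfl)
    have hg'bd : ∀ x, |g' x| ≤ 1 := by
      intro x
      rw [abs_of_nonneg (le_max_left _ _)]
      exact max_le zero_le_one (min_le_right _ _)
    have hg'p : (fun ω => g' (p i ω)) =ᵐ[μ]
        μ[(fun ω => f fun j => p j ω)|MeasurableSpace.comap (p i) inferInstance] := by
      filter_upwards [hg, hce_nonneg, hce_le_one] with ω h1 h2 h3
      simp only [Pi.zero_apply] at h2
      simp only [hg', h1]
      rw [min_eq_left h3, max_eq_right h2]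
    -- the set A
    set A : Set Ω := (p i) ⁻¹' Set.Ioi (b i) with hA'
    have hAm : MeasurableSet[MeasurableSpace.comap (p i) inferInstance] A :=
      ⟨Set.Ioi (b i), measurableSet_Ioi, rfl⟩
    have hAmeas : MeasurableSet A := (hpm i) measurableSet_Ioi
    -- u : indicator
    set u : ℝ → ℝ := (Set.Ioi (b i)).indicator (fun _ => (1:ℝ)) with hu'
    have humono : Monotone u := by
      intro x y hxy
      by_cases hx : x ∈ Set.Ioi (b i)
      · have hy : y ∈ Set.Ioi (b i) := lt_of_lt_of_le hx hxy
        simp [hu', Set.indicator_of_mem hx, Set.indicator_of_mem hy]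
      · simp only [hu', Set.indicator_of_notMem hx]
        by_cases hy : y ∈ Set.Ioi (b i) <;>
          simp [Set.indicator_of_mem, Set.indicator_of_notMem, hy]
    have hubd : ∀ x, |u x| ≤ 1 := by
      intro x
      simp only [hu']
      by_cases hx : x ∈ Set.Ioi (b i) <;>
        simp [Set.indicator_of_mem, Set.indicator_of_notMem, hx]
    have humeas : Measurable u := measurable_const.indicator measurableSet_Ioi
    -- pushforward measure
    set ν : Measure ℝ := μ.map (p i) with hν
    haveI : IsProbabilityMeasure ν := Measure.isProbabilityMeasure_map (hpm i).aemeasurable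
    -- Step 1: μ(insert-set).toReal = ∫_A f∘p
    have step1 : (μ {ω | ∀ j ∈ insert i S', b j < p j ω}).toReal
        = ∫ ω in A, f (fun j => p j ω) ∂μ := by
      have hset : {ω | ∀ j ∈ insert i S', b j < p j ω} = A ∩ T := by
        ext ω
        simp [hT, hA', Set.mem_Ioi, Finset.forall_mem_insert, Set.mem_inter_iff]
      rw [hfeq, setIntegral_indicator hTmeas, setIntegral_const, smul_eq_mul, mul_one, hset]
      rfl
    -- Step 2: ∫_A f∘p = ∫_A g'(p i)
    have step2 : ∫ ω in A, f (fun j => p j ω) ∂μ = ∫ ω in A, g' (p i ω) ∂μ := by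
      rw [← setIntegral_condExp hm hfint hAm]
      exact setIntegral_congr_ae hAmeas (hg'p.mono fun ω h _ => h.symm)
    -- Step 3: ∫_A g'(p i) = ∫ u(p i) * g'(p i)
    have step3 : ∫ ω in A, g' (p i ω) ∂μ = ∫ ω, u (p i ω) * g' (p i ω) ∂μ := by
      rw [← integral_indicator hAmeas]
      congr 1
      funext ω
      by_cases hω : p i ω ∈ Set.Ioi (b i)
      · have : ω ∈ A := hω
        simp [hu', Set.indicator_of_mem hω, Set.indicator_of_mem this]
      · have : ω ∉ A := hω
        simp [hu', Set.indicator_of_notMem hω, Set.indicator_of_notMem this]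
    -- Step 4: change of variables
    have step4 : ∫ ω, u (p i ω) * g' (p i ω) ∂μ = ∫ x, u x * g' x ∂ν := by
      rw [hν, integral_map (f := fun x => u x * g' x) (hpm i).aemeasurable
        (humeas.mul hg'mono.measurable).aestronglyMeasurable]
    -- Step 5: Chebyshev
    have step5 : (∫ x, u x ∂ν) * (∫ x, g' x ∂ν) ≤ ∫ x, u x * g' x ∂ν :=
      cheb_assoc ν humono hg'mono hubd hg'bd
    -- Step 6: ∫ u dν = μ{b i < p i}.toReal
    have step6 : ∫ x, u x ∂ν = (μ {ω | b i < p i ω}).toReal := by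
      rw [hu', integral_indicator measurableSet_Ioi, setIntegral_const, smul_eq_mul, mul_one,
        hν, map_measureReal_apply (hpm i) measurableSet_Ioi]
      rfl
    -- Step 7: ∫ g' dν = μ(T).toReal
    have step7 : ∫ x, g' x ∂ν = (μ T).toReal := by
      rw [hν, integral_map (hpm i).aemeasurable hg'mono.measurable.aestronglyMeasurable]
      rw [integral_congr_ae hg'p, integral_condExp hm]
      rw [hfeq, integral_indicator hTmeas, setIntegral_const, smul_eq_mul, mul_one]
      rfl
    -- combine
    rw [Finset.prod_insert hiS']
    calc (μ {ω | b i < p i ω}).toReal * ∏ j ∈ S', (μ {ω | b j < p j ω}).toReal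
        ≤ (μ {ω | b i < p i ω}).toReal * (μ T).toReal := by
          exact mul_le_mul_of_nonneg_left (ih hS'sub) ENNReal.toReal_nonneg
      _ = (∫ x, u x ∂ν) * (∫ x, g' x ∂ν) := by rw [step6, step7]
      _ ≤ ∫ x, u x * g' x ∂ν := step5
      _ = (μ {ω | ∀ j ∈ insert i S', b j < p j ω}).toReal := by
          rw [step1, step2, step3, step4]

end Aux

/-- Positive regression dependence on the subset `I` (PRDS). -/
def PRDS {Ω : Type*} {n : ℕ} [MeasurableSpace Ω] (μ : Measure Ω) (p : Fin n → Ω → ℝ)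
    (I : Finset (Fin n)) : Prop :=
  ∀ i ∈ I, ∀ f : (Fin n → ℝ) → ℝ, Monotone f →
    Integrable (fun ω => f fun j => p j ω) μ →
      ∃ g : ℝ → ℝ, Monotone g ∧
        (fun ω => g (p i ω))
          =ᵐ[μ] μ[(fun ω => f fun j => p j ω)|MeasurableSpace.comap (p i) inferInstance]

/-- under PRDS on `I_0`,
`P(⋂_{i∈I_0} {p_i > b_i}) ≥ ∏_{i∈I_0} P(p_i > b_i)`. -/
theorem prds_positive_quadrant_dependence {Ω : Type*} {n : ℕ} [MeasurableSpace Ω]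
    (μ : Measure Ω) [IsProbabilityMeasure μ] (p : Fin n → Ω → ℝ)
    (I0 : Finset (Fin n)) (hI0 : I0.Nonempty)
    (hp01 : ∀ i ω, p i ω ∈ Set.Icc (0 : ℝ) 1) (hpm : ∀ i, Measurable (p i))
    (b : Fin n → ℝ) (hb : ∀ i ∈ I0, b i ∈ Set.Icc (0 : ℝ) 1)
    (hprds : PRDS μ p I0) :
    ∏ i ∈ I0, μ {ω | b i < p i ω} ≤ μ {ω | ∀ i ∈ I0, b i < p i ω} := by
  have key := prds_key μ p I0 hpm b hprds I0 le_rfl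
  rw [← ENNReal.toReal_le_toReal (ENNReal.prod_ne_top fun i _ => measure_ne_top μ _)
    (measure_ne_top μ _), ENNReal.toReal_prod]
  exact key

end
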